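/- Let G be a group and A an abelian subgroup of G of finite index. Let g ∈ G, let ℓ be an integer with 1 ≤ ℓ ≤ (G : A) such that g^ℓ ∈ A, and let q be a positive integer coprime to ℓ. Then for every integer k ≥ 0 and every element c of the centralizer C_G(g^{q+kℓ}), there exists an integer m with 1 ≤ m ≤ (G : A) such that c^m lies in the centralizer C_G(g). -/
import Mathlib

/-- Let `G` be a group and `A` an abelian subgroup of `G` of finite index.
Let `g ∈ G`, let `ℓ` be an integer with `1 ≤ ℓ ≤ (G : A)` such that `g ^ ℓ ∈ A`,
and let `q` be a positive integer coprime to `ℓ`.  Then for every integer `k ≥ 0`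
and every element `c` of the centralizer of `g ^ (q + k * ℓ)`, there exists `m`
with `1 ≤ m ≤ (G : A)` such that `c ^ m` lies in the centralizer of `g`. -/
theorem stmt0 {G : Type*} [Group G] (A : Subgroup G)
    (hA : ∀ a b : A, a * b = b * a) (hfin : A.FiniteIndex)
    (g : G) (ℓ q : ℕ)
    (hℓ1 : 1 ≤ ℓ) (hℓ2 : ℓ ≤ A.index) (hgℓ : g ^ ℓ ∈ A)
    (hq : 0 < q) (hcop : Nat.Coprime q ℓ) :
    ∀ k : ℕ, ∀ c ∈ Subgroup.centralizer {g ^ (q + k * ℓ)},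
      ∃ m : ℕ, 1 ≤ m ∧ m ≤ A.index ∧ c ^ m ∈ Subgroup.centralizer {g} := by
  intro k c hc
  obtain ⟨m, hm0, hmle, hmA⟩ := Subgroup.exists_pow_mem_of_index_ne_zero hfin.index_ne_zero c
  refine ⟨m, hm0, hmle, ?_⟩
  rw [Subgroup.mem_centralizer_singleton_iff] at hc ⊢
  -- c^m commutes with g^ℓ since both in abelian A
  have hcomm_ℓ : c ^ m * g ^ ℓ = g ^ ℓ * c ^ m := by
    have := hA ⟨c ^ m, hmA⟩ ⟨g ^ ℓ, hgℓ⟩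
    exact congrArg Subtype.val this
  set N := q + k * ℓ with hN
  have hcomm_N : c ^ m * g ^ N = g ^ N * c ^ m := by
    have h1 : Commute c (g ^ N) := hc
    exact (h1.pow_left m).eq
  -- gcd(N, ℓ) = 1
  have hNcop : Nat.Coprime N ℓ := by
    have : N % ℓ = q % ℓ := by
      simp [hN, Nat.add_mul_mod_self_right]
    unfold Nat.Coprime
    rw [Nat.gcd_comm, Nat.gcd_rec, this, ← Nat.gcd_rec, Nat.gcd_comm]
    exact hcop
  obtain ⟨a, b, hab⟩ : ∃ a b : ℤ, a * N + b * ℓ = 1 := by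
    refine ⟨Nat.gcdA N ℓ, Nat.gcdB N ℓ, ?_⟩
    have := Nat.gcd_eq_gcd_ab N ℓ
    rw [hNcop] at this
    push_cast at this
    linarith [this]
  have hN' : Commute (c ^ m) ((g ^ N : G) ^ a) := Commute.zpow_right hcomm_N a
  have hℓ' : Commute (c ^ m) ((g ^ ℓ : G) ^ b) := Commute.zpow_right hcomm_ℓ b
  have : Commute (c ^ m) g := by
    have h := hN'.mul_right hℓ'
    rwa [← zpow_natCast g N, ← zpow_natCast g ℓ, ← zpow_mul, ← zpow_mul,
      ← zpow_add, mul_comm (N : ℤ) a, mul_comm (ℓ : ℤ) b, hab, zpow_one] at h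
  exact this.eq
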